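/- arXiv:2203.11310 — 2 statements merged into one kernel-verified Lean document; each statement's English description precedes it below -/
import Mathlib

section
/- Let P₀ : ℝ → ℝ be a probability density (nonnegative, integrable, ∫ P₀ = 1) such that x ↦ xⁿ P₀(x) is integrable for every integer n ≥ 0, and suppose its characteristic function M₀(θ) = ∫ P₀(x) e^{iθx} dx satisfies M₀(θ) = 0 for all |θ| > L, where L > 0. Then for every λ > L, every φ ∈ ℝ, and every ε ∈ [-1,1], the function P_ε(x) = P₀(x)(1 + ε cos(λx + φ)) is a probability density, and for every integer n ≥ 0 it satisfies ∫ xⁿ P_ε(x) dx = ∫ xⁿ P₀(x) dx. -/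
open MeasureTheory Real Complex
open scoped ComplexConjugate

private lemma exp_deriv' (x θ : ℝ) :
    HasDerivAt (fun θ : ℝ => Complex.exp (Complex.I * θ * x))
      (Complex.exp (Complex.I * θ * x) * (Complex.I * x)) θ := by
  have h : HasDerivAt (fun w : ℂ => Complex.exp (Complex.I * w * x))
      (Complex.exp (Complex.I * (θ:ℂ) * x) * (Complex.I * x)) (θ:ℂ) := by
    simpa using (((hasDerivAt_id (θ:ℂ)).const_mul Complex.I).mul_const (x:ℂ)).cexp
  exact h.comp_ofReal

private lemma exp_norm' (θ x : ℝ) : ‖Complex.exp (Complex.I * θ * x)‖ = 1 := by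
  rw [Complex.norm_exp]; simp

private lemma key_vanish (P₀ : ℝ → ℝ)
    (hnn : ∀ x, 0 ≤ P₀ x) (hint : Integrable P₀)
    (hmom : ∀ n : ℕ, Integrable (fun x => x ^ n * P₀ x))
    (L : ℝ) (hL : 0 < L)
    (hvanish : ∀ θ : ℝ, L < |θ| →
      ∫ x : ℝ, (↑(P₀ x) : ℂ) * Complex.exp (Complex.I * θ * x) = 0) :
    ∀ n : ℕ, ∀ θ : ℝ, L < θ →
      ∫ x : ℝ, ((x:ℂ)^n * (P₀ x : ℂ)) * Complex.exp (Complex.I * θ * x) = 0 := by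
  have hmc : ∀ n : ℕ, AEStronglyMeasurable (fun x : ℝ => (x:ℂ)^n * (P₀ x : ℂ)) volume := by
    intro n
    have : (fun x : ℝ => (x:ℂ)^n * (P₀ x : ℂ)) = fun x => ((x^n * P₀ x : ℝ) : ℂ) := by
      funext x; push_cast; ring
    rw [this]
    exact Complex.continuous_ofReal.comp_aestronglyMeasurable (hmom n).1
  have hFint : ∀ (n : ℕ) (θ : ℝ), Integrable
      (fun x : ℝ => ((x:ℂ)^n * (P₀ x : ℂ)) * Complex.exp (Complex.I * θ * x)) := by
    intro n θ
    have h1 : Integrable (fun x : ℝ => ((x^n * P₀ x : ℝ) : ℂ)) := (hmom n).ofReal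
    have h2 := h1.bdd_mul
      (Complex.continuous_exp.comp (by continuity : Continuous fun x : ℝ =>
        Complex.I * θ * x)).aestronglyMeasurable
      (c := 1) (Filter.Eventually.of_forall fun x => le_of_eq (exp_norm' θ x))
    refine h2.congr ?_
    filter_upwards with x
    simp only [Function.comp]; push_cast; ring
  intro n
  induction n with
  | zero =>
    intro θ hθ
    have := hvanish θ (by rw [abs_of_pos (hL.trans hθ)]; exact hθ)
    simpa using this
  | succ n ih =>
    intro θ hθ
    set F : ℝ → ℝ → ℂ := fun θ x => ((x:ℂ)^n * (P₀ x : ℂ)) * Complex.exp (Complex.I * θ * x)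
    set F' : ℝ → ℝ → ℂ := fun θ x =>
      ((x:ℂ)^n * (P₀ x : ℂ)) * (Complex.exp (Complex.I * θ * x) * (Complex.I * x))
    have key := hasDerivAt_integral_of_dominated_loc_of_deriv_le (F := F) (F' := F')
      (x₀ := θ) (bound := fun x => |x ^ (n+1) * P₀ x|)
      (Metric.ball_mem_nhds θ (sub_pos.mpr hθ))
      (Filter.Eventually.of_forall fun θ' => (hFint n θ').1)
      (hFint n θ)
      (((hmc n).mul (((Complex.continuous_exp.comp (by continuity : Continuous fun x : ℝ =>
          Complex.I * θ * x)).aestronglyMeasurable.mul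
          (Complex.continuous_ofReal.aestronglyMeasurable.const_mul Complex.I)))))
      (Filter.Eventually.of_forall fun x => fun θ' _ => by
        have h1 : ‖(Complex.exp (Complex.I * θ' * x))‖ = 1 := exp_norm' θ' x
        simp only [F', norm_mul, Complex.norm_I,
          Complex.norm_real, Real.norm_eq_abs, norm_pow, abs_mul, _root_.abs_pow, h1, one_mul, mul_one]
        rw [_root_.abs_of_nonneg (hnn x)]
        exact le_of_eq (by rw [pow_succ]; ring))
      ((hmom (n+1)).abs)
      (Filter.Eventually.of_forall fun x => fun θ' _ => (exp_deriv' x θ').const_mul _)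
    obtain ⟨-, hderiv⟩ := key
    have hev : (fun θ' => ∫ x : ℝ, F θ' x) =ᶠ[nhds θ] (fun _ => 0) := by
      have : Set.Ioi L ∈ nhds θ := Ioi_mem_nhds hθ
      filter_upwards [this] with θ' hθ'
      exact ih θ' hθ'
    have hzero : HasDerivAt (fun θ' => ∫ x : ℝ, F θ' x) 0 θ :=
      (hasDerivAt_const θ (0:ℂ)).congr_of_eventuallyEq hev
    have huniq : ∫ x : ℝ, F' θ x = 0 := hderiv.unique hzero
    have hre : ∫ x : ℝ, F' θ x = Complex.I * ∫ x : ℝ,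
        ((x:ℂ)^(n+1) * (P₀ x : ℂ)) * Complex.exp (Complex.I * θ * x) := by
      rw [← integral_const_mul]
      congr 1; funext x; simp only [F']; ring
    rw [hre] at huniq
    exact (mul_eq_zero.mp huniq).resolve_left Complex.I_ne_zero

/-- If the probability density `P₀` has all moments finite and a
characteristic function vanishing for `|θ| > L > 0`, then for every `λ > L`, `φ ∈ ℝ`,
`ε ∈ [-1,1]`, the perturbed function `P_ε(x) = P₀(x)(1 + ε cos(λx + φ))` is a
probability density with the same moments as `P₀`. -/
theorem stmt_5 (P₀ : ℝ → ℝ)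
    (hnn : ∀ x, 0 ≤ P₀ x) (hint : Integrable P₀) (hone : ∫ x, P₀ x = 1)
    (hmom : ∀ n : ℕ, Integrable (fun x => x ^ n * P₀ x))
    (L : ℝ) (hL : 0 < L)
    (hvanish : ∀ θ : ℝ, L < |θ| →
      ∫ x : ℝ, (↑(P₀ x) : ℂ) * Complex.exp (Complex.I * θ * x) = 0)
    (lam φ ε : ℝ) (hlam : L < lam) (hε : ε ∈ Set.Icc (-1 : ℝ) 1) :
    (∀ x, 0 ≤ P₀ x * (1 + ε * Real.cos (lam * x + φ))) ∧
      Integrable (fun x => P₀ x * (1 + ε * Real.cos (lam * x + φ))) ∧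
      (∫ x, P₀ x * (1 + ε * Real.cos (lam * x + φ))) = 1 ∧
      ∀ n : ℕ, ∫ x, x ^ n * (P₀ x * (1 + ε * Real.cos (lam * x + φ)))
        = ∫ x, x ^ n * P₀ x := by
  obtain ⟨hε1, hε2⟩ := hε
  have hC := key_vanish P₀ hnn hint hmom L hL hvanish
  have hcosint : ∀ n : ℕ, Integrable (fun x => x ^ n * P₀ x * Real.cos (lam * x + φ)) := by
    intro n
    have h2 := (hmom n).bdd_mul
      (Continuous.aestronglyMeasurable
        (by continuity : Continuous fun x : ℝ => Real.cos (lam * x + φ)))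
      (c := 1) (Filter.Eventually.of_forall fun x => by simpa using Real.abs_cos_le_one (lam * x + φ))
    exact h2.congr (by filter_upwards with x; ring)
  have hcoszero : ∀ n : ℕ, ∫ x, x ^ n * P₀ x * Real.cos (lam * x + φ) = 0 := by
    intro n
    have h0 := hC n lam hlam
    have h1 : ∫ x : ℝ, Complex.exp (Complex.I * φ) *
        (((x:ℂ)^n * (P₀ x:ℂ)) * Complex.exp (Complex.I * lam * x)) = 0 := by
      rw [integral_const_mul, h0, mul_zero]
    have h2 : ∀ x : ℝ, Complex.exp (Complex.I * φ) *
        (((x:ℂ)^n * (P₀ x:ℂ)) * Complex.exp (Complex.I * lam * x))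
        = ((x:ℂ)^n * (P₀ x:ℂ)) * Complex.exp (Complex.I * ((lam * x + φ : ℝ) : ℂ)) := by
      intro x
      rw [show Complex.I * ((lam * x + φ : ℝ) : ℂ) = Complex.I * lam * x + Complex.I * φ by
        push_cast; ring, Complex.exp_add]
      ring
    simp only [h2] at h1
    have hInt2 : Integrable (fun x : ℝ =>
        ((x:ℂ)^n * (P₀ x:ℂ)) * Complex.exp (Complex.I * ((lam * x + φ : ℝ) : ℂ))) := by
      have ha : Integrable (fun x : ℝ => ((x^n * P₀ x : ℝ) : ℂ)) := (hmom n).ofReal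
      have hb := ha.bdd_mul
        (Complex.continuous_exp.comp (by continuity : Continuous fun x : ℝ =>
          Complex.I * ((lam * x + φ : ℝ) : ℂ))).aestronglyMeasurable
        (c := 1) (Filter.Eventually.of_forall fun x => by
          rw [Function.comp_apply, Complex.norm_exp]; simp)
      refine hb.congr ?_
      filter_upwards with x
      simp only [Function.comp]; push_cast; ring
    have h4 := congrArg Complex.re h1
    rw [← RCLike.re_eq_complex_re, ← integral_re hInt2] at h4
    simp only [map_zero] at h4
    rw [← h4]
    congr 1; funext x
    rw [RCLike.re_eq_complex_re]
    have heq : ((x:ℂ)^n * (P₀ x:ℂ)) * Complex.exp (Complex.I * ((lam * x + φ : ℝ) : ℂ))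
        = ((x^n * P₀ x : ℝ):ℂ) * Complex.exp (((lam * x + φ : ℝ):ℂ) * Complex.I) := by
      rw [mul_comm Complex.I]; push_cast; ring
    rw [heq, Complex.re_ofReal_mul, Complex.exp_ofReal_mul_I_re]
  -- nonnegativity
  have habs : ∀ x, |ε * Real.cos (lam * x + φ)| ≤ 1 := fun x => by
    rw [abs_mul]
    calc |ε| * |Real.cos (lam * x + φ)| ≤ 1 * 1 :=
      mul_le_mul (abs_le.mpr ⟨hε1, hε2⟩) (Real.abs_cos_le_one _) (abs_nonneg _) zero_le_one
    _ = 1 := one_mul 1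
  have hpos : ∀ x, 0 ≤ P₀ x * (1 + ε * Real.cos (lam * x + φ)) := fun x =>
    mul_nonneg (hnn x) (by linarith [(abs_le.mp (habs x)).1])
  -- integrability
  have hintP : Integrable (fun x => P₀ x * (1 + ε * Real.cos (lam * x + φ))) := by
    have h0 : Integrable (fun x => x ^ 0 * P₀ x * Real.cos (lam * x + φ)) := hcosint 0
    simp only [pow_zero, one_mul] at h0
    have := hint.add (h0.const_mul ε)
    exact this.congr (by filter_upwards with x; simp only [Pi.add_apply]; ring)
  -- moments
  have hmoments : ∀ n : ℕ, ∫ x, x ^ n * (P₀ x * (1 + ε * Real.cos (lam * x + φ)))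
      = ∫ x, x ^ n * P₀ x := by
    intro n
    have heq : (fun x => x ^ n * (P₀ x * (1 + ε * Real.cos (lam * x + φ))))
        = fun x => x ^ n * P₀ x + ε * (x ^ n * P₀ x * Real.cos (lam * x + φ)) := by
      funext x; ring
    rw [heq, integral_add (hmom n) ((hcosint n).const_mul ε), integral_const_mul,
      hcoszero n, mul_zero, add_zero]
  refine ⟨hpos, hintP, ?_, hmoments⟩
  have := hmoments 0
  simp only [pow_zero, one_mul] at this
  rw [this, hone]
end

section
/- Let P₀ : ℝ → ℝ be a continuous probability density with all moments finite and whose characteristic function vanishes for |θ| > L (L > 0), let λ > L and φ ∈ ℝ, and suppose there exists a point x₀ with P₀(x₀) > 0. Then for ε, ε' ∈ [-1,1] with ε ≠ ε', the densities P_ε(x) = P₀(x)(1 + ε cos(λx + φ)) and P_{ε'}(x) = P₀(x)(1 + ε' cos(λx + φ)) are not equal: there exists x ∈ ℝ with P_ε(x) ≠ P_{ε'}(x). Consequently P₀ is M-indeterminate: distinct densities share all of its moments. -/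
open MeasureTheory Real Complex
open scoped ComplexConjugate

open FourierTransform

lemma aux_deriv_zero (g : ℝ → ℂ) (c : ℝ) (h : ∀ w : ℝ, c < |w| → g w = 0) :
    ∀ n : ℕ, ∀ w : ℝ, c < |w| → iteratedDeriv n g w = 0 := by
  intro n
  induction n with
  | zero => simpa using h
  | succ n ih =>
    intro w hw
    rw [iteratedDeriv_succ]
    have hopen : IsOpen {w : ℝ | c < |w|} := isOpen_lt continuous_const continuous_abs
    have hev : iteratedDeriv n g =ᶠ[nhds w] (fun _ => (0:ℂ)) := by
      filter_upwards [hopen.mem_nhds hw] with y hy using ih y hy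
    rw [hev.deriv_eq, deriv_const]

lemma aux_key (P₀ : ℝ → ℝ) (hcont : Continuous P₀) (hnn : ∀ x, 0 ≤ P₀ x)
    (hmom : ∀ n : ℕ, Integrable (fun x => |x| ^ n * P₀ x))
    (L : ℝ) (hL : 0 < L)
    (hvanish : ∀ θ : ℝ, L < |θ| →
      ∫ x : ℝ, (↑(P₀ x) : ℂ) * Complex.exp (Complex.I * θ * x) = 0)
    (n : ℕ) (θ : ℝ) (hθ : L < |θ|) :
    ∫ x : ℝ, (x : ℂ) ^ n * (↑(P₀ x) : ℂ) * Complex.exp (Complex.I * θ * x) = 0 := by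
  set f : ℝ → ℂ := fun x => (P₀ x : ℂ) with hf
  -- integrability of x^k • f
  have hIntk : ∀ k : ℕ, Integrable (fun x : ℝ => x ^ k • f x) := by
    intro k
    have hb : ∀ x : ℝ, ‖x ^ k • f x‖ ≤ |x| ^ k * P₀ x := by
      intro x
      simp only [norm_smul, hf, Complex.norm_real, Real.norm_eq_abs, norm_pow]
      rw [_root_.abs_of_nonneg (hnn x)]
    exact (hmom k).mono' (((continuous_pow k).smul (Complex.continuous_ofReal.comp hcont)).aestronglyMeasurable) (Filter.Eventually.of_forall hb)
  -- Fourier integral in terms of char function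
  have hFour : ∀ (g : ℝ → ℂ) (w : ℝ), 𝓕 g w = ∫ x : ℝ, Complex.exp (Complex.I * (-2 * π * w) * x) * g x := by
    intro g w
    rw [Real.fourier_eq']
    congr 1
    ext x
    rw [smul_eq_mul]
    congr 2
    simp only [RCLike.inner_apply, conj_trivial]
    push_cast
    ring
  have hF0 : ∀ w : ℝ, L / (2 * π) < |w| → 𝓕 f w = 0 := by
    intro w hw
    rw [hFour]
    have h2π : (0:ℝ) < 2 * π := by positivity
    have : L < |(-2) * π * w| := by
      rw [abs_mul, abs_mul, abs_neg, _root_.abs_two, _root_.abs_of_pos Real.pi_pos]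
      calc L = 2 * π * (L / (2 * π)) := by field_simp
        _ < 2 * π * |w| := by exact (mul_lt_mul_iff_right₀ h2π).mpr hw

    have := hvanish ((-2) * π * w) this
    rw [← this]
    congr 1; ext x; push_cast; ring
  have hID : iteratedDeriv n (𝓕 f) = 𝓕 (fun x : ℝ => (-2 * π * Complex.I * x) ^ n • f x) :=
    Real.iteratedDeriv_fourier (N := (n : ℕ∞)) (fun k hk => hIntk k) le_rfl
  -- evaluate at w = -θ/(2π)
  set w : ℝ := -θ / (2 * π) with hwdef
  have h2π : (0:ℝ) < 2 * π := by positivity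
  have hwabs : L / (2 * π) < |w| := by
    rw [hwdef, abs_div, abs_neg, _root_.abs_of_pos h2π]
    exact (div_lt_div_iff_of_pos_right h2π).mpr hθ
  have hFg0 : 𝓕 (fun x : ℝ => (-2 * π * Complex.I * x) ^ n • f x) w = 0 := by
    rw [← hID]
    exact aux_deriv_zero (𝓕 f) (L / (2 * π)) hF0 n w hwabs
  rw [hFour] at hFg0
  have hθw : -2 * π * w = θ := by rw [hwdef]; field_simp
  have hθwC : (-2 : ℂ) * (π : ℝ) * (w : ℝ) = ((θ : ℝ) : ℂ) := by
    rw [← hθw]; push_cast; ring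
  rw [hθwC] at hFg0
  have hsplit : (fun x : ℝ => Complex.exp (Complex.I * θ * x) * ((-2 * π * Complex.I * x) ^ n • f x))
      = fun x : ℝ => (-2 * π * Complex.I) ^ n * ((x:ℂ) ^ n * (↑(P₀ x):ℂ) * Complex.exp (Complex.I * θ * x)) := by
    ext x
    rw [smul_eq_mul, hf]
    push_cast
    ring
  rw [hsplit, integral_const_mul] at hFg0
  have hc : ((-2 : ℂ) * π * Complex.I) ^ n ≠ 0 := by
    apply pow_ne_zero
    simp [Real.pi_ne_zero, Complex.I_ne_zero, Complex.ofReal_ne_zero]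
  exact (mul_eq_zero.mp hFg0).resolve_left hc

/-- For a continuous probability density `P₀` with all moments finite,
characteristic function vanishing for `|θ| > L > 0`, and `P₀(x₀) > 0` somewhere, the
Stieltjes-class densities `P_ε(x) = P₀(x)(1 + ε cos(λx + φ))` (with `λ > L`) for
distinct `ε ≠ ε'` in `[-1,1]` are distinct functions yet share all moments: `P₀` is
M-indeterminate. -/
theorem stmt_10 (P₀ : ℝ → ℝ) (hcont : Continuous P₀)
    (hnn : ∀ x, 0 ≤ P₀ x) (hint : Integrable P₀) (hone : ∫ x, P₀ x = 1)
    (hmom : ∀ n : ℕ, Integrable (fun x => |x| ^ n * P₀ x))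
    (L : ℝ) (hL : 0 < L)
    (hvanish : ∀ θ : ℝ, L < |θ| →
      ∫ x : ℝ, (↑(P₀ x) : ℂ) * Complex.exp (Complex.I * θ * x) = 0)
    (lam φ : ℝ) (hlam : L < lam)
    (x₀ : ℝ) (hx₀ : 0 < P₀ x₀)
    (ε ε' : ℝ) (hε : ε ∈ Set.Icc (-1 : ℝ) 1) (hε' : ε' ∈ Set.Icc (-1 : ℝ) 1)
    (hne : ε ≠ ε') :
    (∃ x : ℝ, P₀ x * (1 + ε * Real.cos (lam * x + φ))
        ≠ P₀ x * (1 + ε' * Real.cos (lam * x + φ))) ∧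
      ∀ n : ℕ, ∫ x, x ^ n * (P₀ x * (1 + ε * Real.cos (lam * x + φ)))
        = ∫ x, x ^ n * (P₀ x * (1 + ε' * Real.cos (lam * x + φ))) := by
  
  have hlam0 : 0 < lam := lt_trans hL hlam
  constructor
  · -- distinctness
    -- find δ neighborhood of positivity
    have hev : ∀ᶠ y in nhds x₀, 0 < P₀ y :=
      (hcont.tendsto x₀).eventually (eventually_gt_nhds hx₀)
    obtain ⟨δ, hδ, hball⟩ := Metric.eventually_nhds_iff.mp hev
    -- a point x near x₀ with cos ≠ 0 and P₀ > 0
    have hpick : ∃ x : ℝ, 0 < P₀ x ∧ Real.cos (lam * x + φ) ≠ 0 := by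
      by_cases hc : Real.cos (lam * x₀ + φ) ≠ 0
      · exact ⟨x₀, hball (by simp [hδ]), hc⟩
      · push_neg at hc
        set t : ℝ := min (δ / 2) (π / (2 * lam)) with ht
        have ht0 : 0 < t := lt_min (by linarith) (by positivity)
        have htδ : t < δ := lt_of_le_of_lt (min_le_left _ _) (by linarith)
        have hlt : lam * t ≤ π / 2 := by
          have := min_le_right (δ / 2) (π / (2 * lam))
          calc lam * t ≤ lam * (π / (2 * lam)) := by
                exact mul_le_mul_of_nonneg_left this hlam0.le
            _ = π / 2 := by field_simp
        have hsin : 0 < Real.sin (lam * t) :=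
          Real.sin_pos_of_pos_of_lt_pi (by positivity)
            (lt_of_le_of_lt hlt (by linarith [Real.pi_pos]))
        have hsinA : Real.sin (lam * x₀ + φ) ≠ 0 := by
          intro h
          have := Real.sin_sq_add_cos_sq (lam * x₀ + φ)
          rw [h, hc] at this; norm_num at this
        have hdist : dist (x₀ + t) x₀ < δ := by
          rw [Real.dist_eq, show x₀ + t - x₀ = t by ring, _root_.abs_of_pos ht0]
          exact htδ
        refine ⟨x₀ + t, hball hdist, ?_⟩
        have : lam * (x₀ + t) + φ = (lam * x₀ + φ) + lam * t := by ring
        rw [this, Real.cos_add, hc, zero_mul, zero_sub, neg_ne_zero]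
        exact mul_ne_zero hsinA hsin.ne'
    obtain ⟨x, hPx, hcx⟩ := hpick
    refine ⟨x, fun h => hne ?_⟩
    have h1 : (1 + ε * Real.cos (lam * x + φ)) = (1 + ε' * Real.cos (lam * x + φ)) :=
      mul_left_cancel₀ hPx.ne' h
    have h2 : ε * Real.cos (lam * x + φ) = ε' * Real.cos (lam * x + φ) := by linarith
    exact mul_right_cancel₀ hcx h2
  · -- moments
    intro n
    -- integrability facts
    have I1 : Integrable (fun x : ℝ => x ^ n * P₀ x) := by
      refine (hmom n).mono' ((continuous_pow n).mul hcont).aestronglyMeasurable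
        (Filter.Eventually.of_forall fun x => ?_)
      rw [Real.norm_eq_abs, abs_mul, _root_.abs_pow, _root_.abs_of_nonneg (hnn x)]
    have I2 : Integrable (fun x : ℝ => x ^ n * P₀ x * Real.cos (lam * x + φ)) := by
      refine (hmom n).mono' (((continuous_pow n).mul hcont).mul
        (Real.continuous_cos.comp (by continuity))).aestronglyMeasurable
        (Filter.Eventually.of_forall fun x => ?_)
      rw [Real.norm_eq_abs, abs_mul, abs_mul, _root_.abs_pow, _root_.abs_of_nonneg (hnn x)]
      calc |x| ^ n * P₀ x * |Real.cos (lam * x + φ)| ≤ |x| ^ n * P₀ x * 1 :=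
            mul_le_mul_of_nonneg_left (Real.abs_cos_le_one _)
              (mul_nonneg (pow_nonneg (abs_nonneg x) n) (hnn x))
        _ = |x| ^ n * P₀ x := mul_one _
    -- the oscillating integral vanishes
    set g : ℝ → ℂ := fun x =>
      (x : ℂ) ^ n * (↑(P₀ x) : ℂ) * Complex.exp (Complex.I * ((lam * x + φ : ℝ) : ℂ)) with hg
    have hgInt : Integrable g := by
      refine (hmom n).mono' ?_ (Filter.Eventually.of_forall fun x => ?_)
      · apply Continuous.aestronglyMeasurable
        apply Continuous.mul
        · exact ((Complex.continuous_ofReal.pow n).mul (Complex.continuous_ofReal.comp hcont))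
        · exact Complex.continuous_exp.comp (by continuity)
      · have hnorm : ‖g x‖ = |x| ^ n * P₀ x := by
          rw [hg]
          simp only [norm_mul, norm_pow, Complex.norm_real,
            Complex.norm_exp, Real.norm_eq_abs]
          have h0 : (Complex.I * ((lam * x + φ : ℝ) : ℂ)).re = 0 := by simp
          rw [h0, Real.exp_zero, mul_one,
            _root_.abs_of_nonneg (hnn x)]
        rw [hnorm]
    have hgzero : ∫ x : ℝ, g x = 0 := by
      have hsplit : g = fun x : ℝ => Complex.exp (Complex.I * φ) *
          ((x : ℂ) ^ n * (↑(P₀ x) : ℂ) * Complex.exp (Complex.I * lam * x)) := by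
        funext x
        show (x : ℂ) ^ n * (↑(P₀ x) : ℂ) * Complex.exp (Complex.I * ((lam * x + φ : ℝ) : ℂ)) = _
        rw [show Complex.I * ((lam * x + φ : ℝ) : ℂ) = Complex.I * lam * x + Complex.I * φ by
          push_cast; ring, Complex.exp_add]
        ring
      rw [hsplit, integral_const_mul,
        aux_key P₀ hcont hnn hmom L hL hvanish n lam (by rwa [abs_of_pos hlam0]), mul_zero]
    have hcos0 : ∫ x : ℝ, x ^ n * P₀ x * Real.cos (lam * x + φ) = 0 := by
      have hgre : ∀ x : ℝ, x ^ n * P₀ x * Real.cos (lam * x + φ) = (g x).re := by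
        intro x
        have : g x = ((x ^ n * P₀ x : ℝ) : ℂ) *
            Complex.exp (((lam * x + φ : ℝ) : ℂ) * Complex.I) := by
          show (x : ℂ) ^ n * (↑(P₀ x) : ℂ) * Complex.exp (Complex.I * ((lam * x + φ : ℝ) : ℂ)) = _
          push_cast; ring
        rw [this, Complex.re_ofReal_mul, Complex.exp_ofReal_mul_I_re]
      simp_rw [hgre]
      have := integral_re hgInt
      simpa [hgzero] using this
    have hmain : ∀ e : ℝ, ∫ x, x ^ n * (P₀ x * (1 + e * Real.cos (lam * x + φ)))
        = ∫ x, x ^ n * P₀ x := by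
      intro e
      have hrw : ∀ x : ℝ, x ^ n * (P₀ x * (1 + e * Real.cos (lam * x + φ)))
          = x ^ n * P₀ x + e * (x ^ n * P₀ x * Real.cos (lam * x + φ)) := fun x => by ring
      simp_rw [hrw]
      rw [integral_add I1 (I2.const_mul e), integral_const_mul, hcos0, mul_zero, add_zero]
    rw [hmain ε, hmain ε']
end
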